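/- Let T0 and T1 be the Goursat matrices with parameters a1, a2, b, A, B, C, D ∈ ℂ, with a1, a2, b all nonzero, and let q∞(x) := det(x·I₄ − (T0·T1)⁻¹) be the characteristic polynomial of (T0·T1)⁻¹. Then: (i) if a1 ≠ b, then ((b−1)(a1−1)(a2−a1)/(b²a1²a2))·A = (a1²·q∞(1/a1) − b²·q∞(1/b))/(a1 − b); (ii) if a2 ≠ b, then ((b−1)(a2−1)(a1−a2)/(b²a1a2²))·D = (a2²·q∞(1/a2) − b²·q∞(1/b))/(a2 − b); (iii) ((b−1)²(a1−1)(a2−1)/(b²a1a2))·(AD − BC) = b²·q∞(1/b). -/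

import Mathlib

open Matrix Polynomial

/-- Goursat's matrix `T0` with parameters `a1, a2, b, A, B, C, D`. -/
noncomputable def goursatT0 (a1 a2 A B C D : ℂ) : Matrix (Fin 4) (Fin 4) ℂ :=
  !![1, 0, A * (1 - a1), B * (1 - a2);
     0, 1, C * (1 - a1), D * (1 - a2);
     0, 0, a1, 0;
     0, 0, 0, a2]

/-- Goursat's matrix `T1` with parameter `b`. -/
noncomputable def goursatT1 (b : ℂ) : Matrix (Fin 4) (Fin 4) ℂ :=
  !![b, 0, 0, 0;
     0, b, 0, 0;
     1 - b, 0, 1, 0;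
     0, 1 - b, 0, 1]

/-- The characteristic polynomial `q∞` of `(T0·T1)⁻¹`, evaluated at `x`. -/
noncomputable def goursatQInf (a1 a2 b A B C D : ℂ) (x : ℂ) : ℂ :=
  ((goursatT0 a1 a2 A B C D * goursatT1 b)⁻¹).charpoly.eval x

lemma goursat_charpoly_eval' (M : Matrix (Fin 4) (Fin 4) ℂ) (r : ℂ) :
    M.charpoly.eval r = (r • (1 : Matrix (Fin 4) (Fin 4) ℂ) - M).det := by
  rw [Matrix.charpoly, _root_.eval_det, matPolyEquiv_charmatrix]
  simp [Matrix.scalar, smul_eq_diagonal_mul, algebraMap, Algebra.algebraMap]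
  rfl

lemma goursat_det_fin_four (M : Matrix (Fin 4) (Fin 4) ℂ) :
    M.det =
      M 0 0*M 1 1*M 2 2*M 3 3 - M 0 0*M 1 1*M 2 3*M 3 2
      - M 0 0*M 1 2*M 2 1*M 3 3 + M 0 0*M 1 2*M 2 3*M 3 1
      + M 0 0*M 1 3*M 2 1*M 3 2 - M 0 0*M 1 3*M 2 2*M 3 1
      - M 0 1*M 1 0*M 2 2*M 3 3 + M 0 1*M 1 0*M 2 3*M 3 2
      + M 0 1*M 1 2*M 2 0*M 3 3 - M 0 1*M 1 2*M 2 3*M 3 0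
      - M 0 1*M 1 3*M 2 0*M 3 2 + M 0 1*M 1 3*M 2 2*M 3 0
      + M 0 2*M 1 0*M 2 1*M 3 3 - M 0 2*M 1 0*M 2 3*M 3 1
      - M 0 2*M 1 1*M 2 0*M 3 3 + M 0 2*M 1 1*M 2 3*M 3 0
      + M 0 2*M 1 3*M 2 0*M 3 1 - M 0 2*M 1 3*M 2 1*M 3 0
      - M 0 3*M 1 0*M 2 1*M 3 2 + M 0 3*M 1 0*M 2 2*M 3 1
      + M 0 3*M 1 1*M 2 0*M 3 2 - M 0 3*M 1 1*M 2 2*M 3 0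
      - M 0 3*M 1 2*M 2 0*M 3 1 + M 0 3*M 1 2*M 2 1*M 3 0 := by
  simp [Matrix.det_succ_row_zero, Fin.sum_univ_succ, Matrix.det_fin_three, Fin.succAbove,
    show (Fin.succ 2 : Fin 4) = 3 from rfl, show (Fin.castSucc 2 : Fin 4) = 2 from rfl,
    show ((1:Fin 4) < 3) from by decide]
  ring

lemma goursat_mul (a1 a2 b A B C D : ℂ) :
    goursatT0 a1 a2 A B C D * goursatT1 b =
    !![b + A * (1 - a1) * (1 - b), B * (1 - a2) * (1 - b), A * (1 - a1), B * (1 - a2);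
       C * (1 - a1) * (1 - b), b + D * (1 - a2) * (1 - b), C * (1 - a1), D * (1 - a2);
       a1 * (1 - b), 0, a1, 0;
       0, a2 * (1 - b), 0, a2] := by
  ext i j
  fin_cases i <;> fin_cases j <;>
    simp [goursatT0, goursatT1, Matrix.mul_apply, Fin.sum_univ_four]

lemma goursat_det (a1 a2 b A B C D : ℂ) :
    (goursatT0 a1 a2 A B C D * goursatT1 b).det = a1 * a2 * b ^ 2 := by
  rw [goursat_mul, goursat_det_fin_four]
  simp
  ring

lemma goursat_qinf (a1 a2 b A B C D : ℂ)
    (ha1 : a1 ≠ 0) (ha2 : a2 ≠ 0) (hb : b ≠ 0) (x : ℂ) :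
    goursatQInf a1 a2 b A B C D x =
      (a1 * a2 * b ^ 2)⁻¹ *
        (x • (goursatT0 a1 a2 A B C D * goursatT1 b) - 1).det := by
  set M := goursatT0 a1 a2 A B C D * goursatT1 b with hM
  have hdet : M.det = a1 * a2 * b ^ 2 := goursat_det a1 a2 b A B C D
  have hdet0 : IsUnit M.det := by
    rw [hdet]
    exact (mul_ne_zero (mul_ne_zero ha1 ha2) (pow_ne_zero 2 hb)).isUnit
  have hinv : M⁻¹ * M = 1 := Matrix.nonsing_inv_mul M hdet0
  have key : x • (1 : Matrix (Fin 4) (Fin 4) ℂ) - M⁻¹ = M⁻¹ * (x • M - 1) := by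
    rw [Matrix.mul_sub, Matrix.mul_smul, hinv, Matrix.mul_one]
  rw [goursatQInf, goursat_charpoly_eval', key, Matrix.det_mul, Matrix.det_nonsing_inv,
    Ring.inverse_eq_inv, hdet]

lemma goursat_smul_det (M : Matrix (Fin 4) (Fin 4) ℂ) (c : ℂ) (hc : c ≠ 0) :
    ((1 / c) • M - 1).det = (M - c • 1).det / c ^ 4 := by
  have h : (1 / c) • M - 1 = (1 / c) • (M - c • (1 : Matrix (Fin 4) (Fin 4) ℂ)) := by
    rw [smul_sub, smul_smul]
    simp [hc]
  rw [h, Matrix.det_smul]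
  simp [Fintype.card_fin]
  rw [inv_mul_eq_div]

set_option maxHeartbeats 2000000 in
lemma goursat_val (a1 a2 b A B C D : ℂ)
    (ha1 : a1 ≠ 0) (ha2 : a2 ≠ 0) (hb : b ≠ 0) (c : ℂ) (hc : c ≠ 0) :
    goursatQInf a1 a2 b A B C D (1 / c) =
      ((b + A * (1 - a1) * (1 - b) - c) * (b + D * (1 - a2) * (1 - b) - c) * (a1 - c) * (a2 - c)
       - (b + A * (1 - a1) * (1 - b) - c) * (D * (1 - a2)) * (a1 - c) * (a2 * (1 - b))
       - (B * (1 - a2) * (1 - b)) * (C * (1 - a1) * (1 - b)) * (a1 - c) * (a2 - c)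
       + (B * (1 - a2) * (1 - b)) * (C * (1 - a1)) * (a1 * (1 - b)) * (a2 - c)
       - (A * (1 - a1)) * (b + D * (1 - a2) * (1 - b) - c) * (a1 * (1 - b)) * (a2 - c)
       + (A * (1 - a1)) * (D * (1 - a2)) * (a1 * (1 - b)) * (a2 * (1 - b))
       + (B * (1 - a2)) * (C * (1 - a1) * (1 - b)) * (a1 - c) * (a2 * (1 - b))
       - (B * (1 - a2)) * (C * (1 - a1)) * (a1 * (1 - b)) * (a2 * (1 - b)))
      / (a1 * a2 * b ^ 2 * c ^ 4) := by
  rw [goursat_qinf a1 a2 b A B C D ha1 ha2 hb, goursat_mul, goursat_smul_det _ c hc,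
    goursat_det_fin_four]
  simp [Matrix.sub_apply, Matrix.smul_apply, Matrix.one_apply]
  field_simp

/-- Recovery of `A`, `D` and `AD − BC` from the characteristic polynomial `q∞`
of `T∞ = (T0·T1)⁻¹`. -/
theorem stmt_8 (a1 a2 b A B C D : ℂ)
    (ha1 : a1 ≠ 0) (ha2 : a2 ≠ 0) (hb : b ≠ 0) :
    ((a1 ≠ b →
      (b - 1) * (a1 - 1) * (a2 - a1) / (b ^ 2 * a1 ^ 2 * a2) * A =
        (a1 ^ 2 * goursatQInf a1 a2 b A B C D (1 / a1) -
          b ^ 2 * goursatQInf a1 a2 b A B C D (1 / b)) / (a1 - b)) ∧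
    (a2 ≠ b →
      (b - 1) * (a2 - 1) * (a1 - a2) / (b ^ 2 * a1 * a2 ^ 2) * D =
        (a2 ^ 2 * goursatQInf a1 a2 b A B C D (1 / a2) -
          b ^ 2 * goursatQInf a1 a2 b A B C D (1 / b)) / (a2 - b)) ∧
    ((b - 1) ^ 2 * (a1 - 1) * (a2 - 1) / (b ^ 2 * a1 * a2) * (A * D - B * C) =
      b ^ 2 * goursatQInf a1 a2 b A B C D (1 / b))) := by
  have hd : ∀ c : ℂ, c ≠ 0 → a1 * a2 * b ^ 2 * c ^ 4 ≠ 0 := fun c hc =>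
    mul_ne_zero (mul_ne_zero (mul_ne_zero ha1 ha2) (pow_ne_zero 2 hb)) (pow_ne_zero 4 hc)
  rw [goursat_val a1 a2 b A B C D ha1 ha2 hb b hb,
    goursat_val a1 a2 b A B C D ha1 ha2 hb a1 ha1,
    goursat_val a1 a2 b A B C D ha1 ha2 hb a2 ha2,
    mul_div_assoc' (a1 ^ 2), mul_div_assoc' (a2 ^ 2), mul_div_assoc' (b ^ 2),
    div_sub_div _ _ (hd a1 ha1) (hd b hb), div_sub_div _ _ (hd a2 ha2) (hd b hb),
    div_div, div_div, div_mul_eq_mul_div, div_mul_eq_mul_div, div_mul_eq_mul_div]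
  refine ⟨fun h1 => ?_, fun h2 => ?_, ?_⟩
  · have h1' : a1 - b ≠ 0 := sub_ne_zero.mpr h1
    rw [div_eq_div_iff (by simp [ha1, ha2, hb])
      (mul_ne_zero (mul_ne_zero (hd a1 ha1) (hd b hb)) h1')]
    ring
  · have h2' : a2 - b ≠ 0 := sub_ne_zero.mpr h2
    rw [div_eq_div_iff (by simp [ha1, ha2, hb])
      (mul_ne_zero (mul_ne_zero (hd a2 ha2) (hd b hb)) h2')]
    ring
  · rw [div_eq_div_iff (by simp [ha1, ha2, hb]) (hd b hb)]
    ring
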